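/- arXiv:2501.04867 — 6 statements merged into one kernel-verified Lean document; each statement's English description precedes it below -/
import Mathlib

section
/- (Second theorem of Poncelet) Let E be an ellipse with a focus at the point O, and let A and B be two points on E. Let the tangent lines to E at A and B intersect at a point C. Then the angle ∠AOC equals the angle ∠BOC, i.e. the line OC bisects the angle ∠AOB. -/
open EuclideanGeometry

lemma poncelet_aux (F₁ F₂ : EuclideanSpace ℝ (Fin 2)) (a : ℝ) (ha : 0 < a)
    (hfoci : dist F₁ F₂ < 2 * a)
    (E : Set (EuclideanSpace ℝ (Fin 2)))
    (hE : E = {P | dist P F₁ + dist P F₂ = 2 * a})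
    (A C : EuclideanSpace ℝ (Fin 2)) (hA : A ∈ E) (hAC : A ≠ C)
    (htanA : ∀ P ∈ E, P ∈ affineSpan ℝ ({A, C} : Set (EuclideanSpace ℝ (Fin 2))) → P = A) :
    ∃ A' : EuclideanSpace ℝ (Fin 2), dist F₂ A' = 2 * a ∧ dist C A' = dist C F₁ ∧
      C ≠ F₁ ∧ ∠ A F₁ C = ∠ F₂ A' C := by
  set s := affineSpan ℝ ({A, C} : Set (EuclideanSpace ℝ (Fin 2))) with hs
  have hAs : A ∈ s := mem_affineSpan ℝ (Set.mem_insert _ _)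
  have hCs : C ∈ s := mem_affineSpan ℝ (Set.mem_insert_of_mem _ rfl)
  haveI : Nonempty s := ⟨⟨A, hAs⟩⟩
  -- the tangent line lies (weakly) outside the ellipse
  have hge : ∀ P ∈ s, 2 * a ≤ dist P F₁ + dist P F₂ := by
    intro Q hQ
    by_contra hlt
    push_neg at hlt
    set v := C -ᵥ A with hv
    have hvne : v ≠ 0 := vsub_ne_zero.2 (Ne.symm hAC)
    have hvnorm : (0:ℝ) < ‖v‖ := norm_pos_iff.2 hvne
    have hvmem : v ∈ s.direction := by
      rw [hs, direction_affineSpan]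
      exact vsub_mem_vectorSpan ℝ (Set.mem_insert_of_mem _ rfl) (Set.mem_insert _ _)
    set γ : ℝ → EuclideanSpace ℝ (Fin 2) := fun t => t • v +ᵥ Q with hγ
    have hγmem : ∀ t, γ t ∈ s := fun t =>
      AffineSubspace.vadd_mem_of_mem_direction (Submodule.smul_mem _ _ hvmem) hQ
    set g : ℝ → ℝ := fun t => dist (γ t) F₁ + dist (γ t) F₂ with hg
    have hγcont : Continuous γ := by rw [hγ]; fun_prop
    have hgcont : Continuous g :=
      (hγcont.dist continuous_const).add (hγcont.dist continuous_const)
    have hγQ : ∀ t, dist (γ t) Q = |t| * ‖v‖ := by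
      intro t
      rw [hγ]
      simp [dist_vadd_left, norm_smul, Real.norm_eq_abs]
    have hbound : ∀ t : ℝ, |t| * ‖v‖ - dist Q F₁ ≤ g t := by
      intro t
      have h1 := dist_triangle (γ t) F₁ Q
      have h2 := dist_triangle (γ t) Q F₁
      have h3 := hγQ t
      have h4 : (0:ℝ) ≤ dist (γ t) F₂ := dist_nonneg
      have h5 : dist F₁ Q = dist Q F₁ := dist_comm _ _
      simp only [hg]
      nlinarith [dist_triangle (γ t) F₁ Q]
    set T : ℝ := (2 * a + dist Q F₁) / ‖v‖ with hT
    have hT0 : 0 ≤ T := by positivity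
    have hTval : T * ‖v‖ = 2 * a + dist Q F₁ := div_mul_cancel₀ _ (ne_of_gt hvnorm)
    have hgT : 2 * a ≤ g T := by
      have := hbound T
      rw [abs_of_nonneg hT0, hTval] at this
      linarith
    have hgT' : 2 * a ≤ g (-T) := by
      have := hbound (-T)
      rw [abs_neg, abs_of_nonneg hT0, hTval] at this
      linarith
    have hg0 : g 0 < 2 * a := by
      simpa only [hg, hγ, zero_smul, zero_vadd] using hlt
    obtain ⟨t₁, ht₁mem, ht₁⟩ := intermediate_value_Icc hT0 hgcont.continuousOn
      (Set.mem_Icc.2 ⟨le_of_lt hg0, hgT⟩)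
    obtain ⟨t₂, ht₂mem, ht₂⟩ := intermediate_value_Icc' (neg_nonpos.2 hT0) hgcont.continuousOn
      (Set.mem_Icc.2 ⟨le_of_lt hg0, hgT'⟩)
    have hE₁ : γ t₁ ∈ E := by rw [hE]; exact ht₁
    have hE₂ : γ t₂ ∈ E := by rw [hE]; exact ht₂
    have h₁ : γ t₁ = A := htanA _ hE₁ (hγmem t₁)
    have h₂ : γ t₂ = A := htanA _ hE₂ (hγmem t₂)
    have ht12 : t₁ = t₂ := by
      have : t₁ • v = t₂ • v := vadd_right_cancel Q (h₁.trans h₂.symm)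
      have hsub : (t₁ - t₂) • v = 0 := by rw [sub_smul, this, sub_self]
      rcases smul_eq_zero.1 hsub with h | h
      · linarith [sub_eq_zero.1 (by linarith [h] : t₁ - t₂ = 0)]
      · exact absurd h hvne
    have ht₁0 : 0 ≤ t₁ := ht₁mem.1
    have ht₂0 : t₂ ≤ 0 := ht₂mem.2
    have : t₁ = 0 := le_antisymm (ht12 ▸ ht₂0) ht₁0
    rw [this] at ht₁
    have : g 0 = 2 * a := ht₁
    linarith
  have hF₁s : F₁ ∉ s := by
    intro h
    have := hge F₁ h
    rw [dist_self] at this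
    linarith [dist_comm F₂ F₁, dist_comm F₁ F₂]
  have hF₂s : F₂ ∉ s := by
    intro h
    have := hge F₂ h
    rw [dist_self] at this
    linarith [dist_comm F₂ F₁, dist_comm F₁ F₂]
  -- F₁ and F₂ are not on opposite sides
  have hnopp : ¬ s.WOppSide F₁ F₂ := by
    intro h
    obtain ⟨p, hp, hw⟩ := AffineSubspace.wOppSide_iff_exists_wbtw.1 h
    have hd := hw.dist_add_dist
    have := hge p hp
    rw [dist_comm F₁ p] at hd
    linarith
  -- hence they are on the same side
  have hsame : s.WSameSide F₁ F₂ := by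
    set p₁ : EuclideanSpace ℝ (Fin 2) := (orthogonalProjection s F₁).val with hp₁
    set p₂ : EuclideanSpace ℝ (Fin 2) := (orthogonalProjection s F₂).val with hp₂
    have hp₁s : p₁ ∈ s := (orthogonalProjection s F₁).2
    have hp₂s : p₂ ∈ s := (orthogonalProjection s F₂).2
    have hu : F₁ -ᵥ p₁ ∈ s.directionᗮ :=
      vsub_orthogonalProjection_mem_direction_orthogonal s F₁
    have hu2 : F₂ -ᵥ p₂ ∈ s.directionᗮ :=
      vsub_orthogonalProjection_mem_direction_orthogonal s F₂
    have hune : F₁ -ᵥ p₁ ≠ 0 := vsub_ne_zero.2 (fun h => hF₁s (h ▸ hp₁s))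
    have hdim : Module.finrank ℝ s.direction = 1 := by
      rw [hs, direction_affineSpan, vectorSpan_pair]
      exact finrank_span_singleton (vsub_ne_zero.2 hAC)
    have hdimo : Module.finrank ℝ s.directionᗮ = 1 := by
      have h2 := Submodule.finrank_add_finrank_orthogonal (K := s.direction)
      rw [hdim, finrank_euclideanSpace_fin] at h2
      omega
    have hspan : Submodule.span ℝ {F₁ -ᵥ p₁} = s.directionᗮ := by
      apply Submodule.eq_of_le_of_finrank_eq
      · rw [Submodule.span_le, Set.singleton_subset_iff]; exact hu
      · rw [finrank_span_singleton hune, hdimo]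
    obtain ⟨c, hc⟩ := Submodule.mem_span_singleton.1 (hspan ▸ hu2)
    rcases le_or_gt 0 c with hc0 | hc0
    · exact ⟨p₁, hp₁s, p₂, hp₂s, hc ▸ SameRay.sameRay_nonneg_smul_right _ hc0⟩
    · exfalso
      apply hnopp
      refine ⟨p₁, hp₁s, p₂, hp₂s, ?_⟩
      have : p₂ -ᵥ F₂ = (-c) • (F₁ -ᵥ p₁) := by
        rw [neg_smul, hc, neg_vsub_eq_vsub_rev]
      rw [this]
      exact SameRay.sameRay_nonneg_smul_right _ (by linarith)
  set A' : EuclideanSpace ℝ (Fin 2) := reflection s F₁ with hA'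
  -- F₁ and its reflection are strictly on opposite sides
  have hopp : s.SOppSide F₁ A' := by
    have : A' = AffineEquiv.pointReflection ℝ
        ((orthogonalProjection s F₁ : EuclideanSpace ℝ (Fin 2))) F₁ := by
      rw [hA', EuclideanGeometry.reflection_apply', AffineEquiv.pointReflection_apply]
    rw [this]
    exact AffineSubspace.sOppSide_pointReflection (orthogonalProjection s F₁).2 hF₁s
  have hopp2 : s.WOppSide F₂ A' :=
    (AffineSubspace.wSameSide_comm.1 hsame).trans_wOppSide hopp.wOppSide hF₁s
  obtain ⟨Q, hQs, hw⟩ := AffineSubspace.wOppSide_iff_exists_wbtw.1 hopp2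
  have hQA' : dist Q A' = dist Q F₁ := dist_reflection_eq_of_mem s hQs F₁
  have hsum : dist F₂ Q + dist Q A' = dist F₂ A' := hw.dist_add_dist
  have hAA'd : dist A A' = dist A F₁ := dist_reflection_eq_of_mem s hAs F₁
  have hAE : dist A F₁ + dist A F₂ = 2 * a := by rw [hE] at hA; exact hA
  have hub : dist F₂ A' ≤ 2 * a := by
    have h1 := dist_triangle F₂ A A'
    have h2 : dist F₂ A = dist A F₂ := dist_comm _ _
    linarith
  have hlb : 2 * a ≤ dist Q F₁ + dist Q F₂ := hge Q hQs
  have hQF₂ : dist Q F₂ = dist F₂ Q := dist_comm _ _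
  have hda : dist F₂ A' = 2 * a := le_antisymm hub (by linarith)
  have hQE : Q ∈ E := by rw [hE]; simp only [Set.mem_setOf_eq]; linarith
  have hQA : Q = A := htanA Q hQE hQs
  rw [hQA] at hw
  -- so A is between F₂ and A'
  have hwb : Wbtw ℝ A' A F₂ := hw.symm
  have hAne : A ≠ A' := by
    intro h
    have : dist A F₁ = 0 := by rw [← hAA'd, ← h, dist_self]
    exact hF₁s (dist_eq_zero.1 this ▸ hAs)
  have hCF₁ : C ≠ F₁ := fun h => hF₁s (h ▸ hCs)
  refine ⟨A', hda, dist_reflection_eq_of_mem s hCs F₁, hCF₁, ?_⟩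
  -- reflect the angle
  have hmap : ∠ A F₁ C = ∠ A A' C := by
    have h := (reflection s).toAffineIsometry.angle_map A F₁ C
    rw [show (reflection s).toAffineIsometry A = A from (EuclideanGeometry.reflection_eq_self_iff A).2 hAs,
      show (reflection s).toAffineIsometry C = C from (EuclideanGeometry.reflection_eq_self_iff C).2 hCs] at h
    exact h.symm
  rw [hmap]
  -- A lies on the segment from A' to F₂
  obtain ⟨t, ht, hte⟩ := hwb
  have htne : t ≠ 0 := by
    intro h
    rw [h] at hte
    simp at hte
    exact hAne hte.symm
  have htpos : 0 < t := lt_of_le_of_ne ht.1 (Ne.symm htne)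
  have hvec : A -ᵥ A' = t • (F₂ -ᵥ A') := by
    rw [← hte, AffineMap.lineMap_apply, vadd_vsub]
  rw [EuclideanGeometry.angle, EuclideanGeometry.angle, hvec,
    InnerProductGeometry.angle_smul_left_of_pos _ _ htpos]

/-- Second theorem of Poncelet: let `E` be an ellipse with foci `F₁, F₂` (so `O = F₁` is a
focus), let `A ≠ B` be points of `E`, and let `C` be the intersection point of the tangent
lines to `E` at `A` and at `B` (the line `AC` meets `E` only at `A`, and the line `BC`
meets `E` only at `B`). Then `∠ A O C = ∠ B O C`, i.e. `OC` bisects the angle `∠ A O B`. -/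
theorem stmt_4 (F₁ F₂ : EuclideanSpace ℝ (Fin 2)) (a : ℝ) (ha : 0 < a)
    (hfoci : dist F₁ F₂ < 2 * a)
    (E : Set (EuclideanSpace ℝ (Fin 2)))
    (hE : E = {P | dist P F₁ + dist P F₂ = 2 * a})
    (A B C : EuclideanSpace ℝ (Fin 2))
    (hA : A ∈ E) (hB : B ∈ E) (hAB : A ≠ B) (hAC : A ≠ C) (hBC : B ≠ C)
    (htanA : ∀ P ∈ E, P ∈ affineSpan ℝ ({A, C} : Set (EuclideanSpace ℝ (Fin 2))) → P = A)
    (htanB : ∀ P ∈ E, P ∈ affineSpan ℝ ({B, C} : Set (EuclideanSpace ℝ (Fin 2))) → P = B) :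
    ∠ A F₁ C = ∠ B F₁ C := by
  obtain ⟨A', hA1, hA2, hCF₁, hA3⟩ := poncelet_aux F₁ F₂ a ha hfoci E hE A C hA hAC htanA
  obtain ⟨B', hB1, hB2, -, hB3⟩ := poncelet_aux F₁ F₂ a ha hfoci E hE B C hB hBC htanB
  rw [hA3, hB3]
  have law1 := EuclideanGeometry.law_cos F₂ A' C
  have law2 := EuclideanGeometry.law_cos F₂ B' C
  rw [hA1, hA2] at law1
  rw [hB1, hB2] at law2
  have hr : 0 < dist C F₁ := dist_pos.2 hCF₁
  have h2 : (2 * (2 * a) * dist C F₁) * Real.cos (∠ F₂ A' C)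
      = (2 * (2 * a) * dist C F₁) * Real.cos (∠ F₂ B' C) := by
    linear_combination law1 - law2
  have hcos := mul_left_cancel₀ (by positivity) h2
  exact Real.injOn_cos ⟨angle_nonneg _ _ _, angle_le_pi _ _ _⟩
    ⟨angle_nonneg _ _ _, angle_le_pi _ _ _⟩ hcos
end

section
/- The Funk distance d_F(x,y) = ln(|x-b|/|y-b|) on a bounded open convex domain U — where b is the point where the ray from x through y meets ∂U — satisfies the triangle inequality d_F(x,z) ≤ d_F(x,y) + d_F(y,z), is nonnegative, and vanishes exactly when x = y; but in general d_F(x,y) ≠ d_F(y,x). -/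
open Real

variable {E : Type*} [NormedAddCommGroup E] [NormedSpace ℝ E]

/-- Parametrize the frontier point on the ray. -/
lemma ray_param {U : Set E} (hopen : IsOpen U) {x y b : E} (hy : y ∈ U)
    (hb : b ∈ frontier U) (hxy : x ≠ y) (hw : Wbtw ℝ x y b) :
    ∃ t : ℝ, 1 < t ∧ b = x + t • (y - x) := by
  have hbU : b ∉ U := by
    have := hb.2
    rwa [hopen.interior_eq] at this
  have hyseg : y ∈ segment ℝ x b := mem_segment_iff_wbtw.2 hw
  rw [segment_eq_image'] at hyseg
  obtain ⟨u, ⟨hu0, hu1⟩, huy⟩ := hyseg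
  have hu0' : u ≠ 0 := by
    rintro rfl
    simp at huy
    exact hxy huy
  have hu1' : u ≠ 1 := by
    rintro rfl
    simp at huy
    exact hbU (by rw [huy]; exact hy)
  have hu0'' : 0 < u := lt_of_le_of_ne hu0 (Ne.symm hu0')
  have hu1'' : u < 1 := lt_of_le_of_ne hu1 hu1'
  refine ⟨u⁻¹, (one_lt_inv₀ hu0'').2 hu1'', ?_⟩
  have h1 : y - x = u • (b - x) := by rw [← huy]; module
  have h2 : u⁻¹ • (y - x) = b - x := by
    rw [h1, smul_smul, inv_mul_cancel₀ hu0', one_smul]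
  rw [h2]; abel

lemma dist_ray {x y b : E} {t : ℝ} (ht : 1 < t) (hb : b = x + t • (y - x)) (hxy : x ≠ y) :
    dist x b = t * ‖y - x‖ ∧ dist y b = (t - 1) * ‖y - x‖ := by
  constructor
  · have : x - b = (-t) • (y - x) := by rw [hb]; module
    rw [dist_eq_norm, this, norm_smul, norm_neg, Real.norm_eq_abs,
      abs_of_pos (by linarith : (0:ℝ) < t)]
  · have : y - b = (-(t - 1)) • (y - x) := by rw [hb]; module
    rw [dist_eq_norm, this, norm_smul, norm_neg, Real.norm_eq_abs,
      abs_of_pos (by linarith : (0:ℝ) < t - 1)]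

lemma ratio_eq {x y b : E} {t : ℝ} (ht : 1 < t) (hb : b = x + t • (y - x)) (hxy : x ≠ y) :
    dist x b / dist y b = t / (t - 1) := by
  obtain ⟨h1, h2⟩ := dist_ray ht hb hxy
  have hn : ‖y - x‖ ≠ 0 := by
    simp only [ne_eq, norm_eq_zero, sub_eq_zero]
    exact fun h => hxy h.symm
  rw [h1, h2, mul_div_mul_right _ _ hn]

lemma key_le {x y b : E} {t : ℝ} (f : E →L[ℝ] ℝ) {h : ℝ}
    (hfx : f x < h) (hfy : f y < h) (hfb : f b ≤ h)
    (ht : 1 < t) (hb : b = x + t • (y - x)) :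
    (h - f x) / (h - f y) ≤ t / (t - 1) := by
  have hfb' : f b = f x + t * (f y - f x) := by
    rw [hb]; simp [mul_sub]
  rw [div_le_div_iff₀ (by linarith) (by linarith)]
  nlinarith [hfb'.symm.trans_le hfb]

lemma key_eq {x y b : E} {t : ℝ} (f : E →L[ℝ] ℝ)
    (hfx : f x < f b) (hfy : f y < f b)
    (ht : 1 < t) (hb : b = x + t • (y - x)) :
    (f b - f x) / (f b - f y) = t / (t - 1) := by
  have hfb' : f b = f x + t * (f y - f x) := by
    rw [hb]; simp [mul_sub]
  have ha : 0 < f y - f x := by nlinarith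
  have e1 : f b - f x = t * (f y - f x) := by linarith
  have e2 : f b - f y = (t - 1) * (f y - f x) := by linarith
  rw [e1, e2, mul_div_mul_right _ _ (ne_of_gt ha)]

/-- The Funk distance `d_F(x,y) = ln(|x-b|/|y-b|)` on a bounded open convex domain `U`
(`b` the point where the ray from `x` through `y` meets `∂U`) satisfies the triangle
inequality, is nonnegative, and is positive for `x ≠ y` (so, with `d_F(x,x) = 0`, it
vanishes exactly on the diagonal); but in general it is not symmetric. -/
theorem stmt_10 (U : Set (EuclideanSpace ℝ (Fin 2))) (hconv : Convex ℝ U)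
    (hopen : IsOpen U) (hbdd : Bornology.IsBounded U)
    (x y z : EuclideanSpace ℝ (Fin 2)) (hx : x ∈ U) (hy : y ∈ U) (hz : z ∈ U)
    (hxy : x ≠ y) (hyz : y ≠ z) (hxz : x ≠ z)
    (bxy byz bxz : EuclideanSpace ℝ (Fin 2))
    (hbxy : bxy ∈ frontier U) (hbyz : byz ∈ frontier U) (hbxz : bxz ∈ frontier U)
    (hrxy : Wbtw ℝ x y bxy) (hryz : Wbtw ℝ y z byz) (hrxz : Wbtw ℝ x z bxz) :
    (Real.log (dist x bxz / dist z bxz) ≤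
        Real.log (dist x bxy / dist y bxy) + Real.log (dist y byz / dist z byz)) ∧
    (0 ≤ Real.log (dist x bxy / dist y bxy)) ∧
    (0 < Real.log (dist x bxy / dist y bxy)) ∧
    (∃ (V : Set (EuclideanSpace ℝ (Fin 2))), Convex ℝ V ∧ IsOpen V ∧
      Bornology.IsBounded V ∧
      ∃ (x' y' b₁ b₂ : EuclideanSpace ℝ (Fin 2)), x' ∈ V ∧ y' ∈ V ∧ x' ≠ y' ∧
        b₁ ∈ frontier V ∧ b₂ ∈ frontier V ∧ Wbtw ℝ x' y' b₁ ∧ Wbtw ℝ y' x' b₂ ∧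
        Real.log (dist x' b₁ / dist y' b₁) ≠ Real.log (dist y' b₂ / dist x' b₂)) := by
  obtain ⟨t1, ht1, hb1⟩ := ray_param hopen hy hbxy hxy hrxy
  obtain ⟨t2, ht2, hb2⟩ := ray_param hopen hz hbyz hyz hryz
  obtain ⟨t3, ht3, hb3⟩ := ray_param hopen hz hbxz hxz hrxz
  -- positivity of all distance ratios
  have r1 := ratio_eq ht1 hb1 hxy
  have r2 := ratio_eq ht2 hb2 hyz
  have r3 := ratio_eq ht3 hb3 hxz
  have p1 : 0 < dist x bxy / dist y bxy := by
    rw [r1]; exact div_pos (by linarith) (by linarith)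
  have p2 : 0 < dist y byz / dist z byz := by
    rw [r2]; exact div_pos (by linarith) (by linarith)
  have p3 : 0 < dist x bxz / dist z bxz := by
    rw [r3]; exact div_pos (by linarith) (by linarith)
  have one_lt1 : 1 < dist x bxy / dist y bxy := by
    rw [r1, lt_div_iff₀ (by linarith)]; linarith
  refine ⟨?_, (Real.log_pos one_lt1).le, Real.log_pos one_lt1, ?_⟩
  · -- triangle inequality
    have hbU : bxz ∉ U := by
      have := hbxz.2; rwa [hopen.interior_eq] at this
    obtain ⟨f, hf⟩ := geometric_hahn_banach_open_point hconv hopen hbU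
    set h := f bxz with hh
    have hfx : f x < h := hf x hx
    have hfy : f y < h := hf y hy
    have hfz : f z < h := hf z hz
    have hclos : ∀ p ∈ closure U, f p ≤ h := by
      intro p hp
      exact (isClosed_le f.continuous continuous_const).closure_subset_iff.2
        (fun q hq => (hf q hq).le) hp
    have hfb1 : f bxy ≤ h := hclos bxy (frontier_subset_closure hbxy)
    have hfb2 : f byz ≤ h := hclos byz (frontier_subset_closure hbyz)
    have e3 : dist x bxz / dist z bxz = (h - f x) / (h - f z) := by
      rw [r3, ← key_eq f hfx hfz ht3 hb3]
    have k1 : (h - f x) / (h - f y) ≤ dist x bxy / dist y bxy := by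
      rw [r1]; exact key_le f hfx hfy hfb1 ht1 hb1
    have k2 : (h - f y) / (h - f z) ≤ dist y byz / dist z byz := by
      rw [r2]; exact key_le f hfy hfz hfb2 ht2 hb2
    have hsplit : ((h - f x) / (h - f y)) * ((h - f y) / (h - f z))
        = (h - f x) / (h - f z) := by
      rw [div_mul_div_comm, mul_comm (h - f x) _,
        mul_div_mul_left _ _ (ne_of_gt (by linarith : (0:ℝ) < h - f y))]
    have hprod : dist x bxz / dist z bxz ≤
        (dist x bxy / dist y bxy) * (dist y byz / dist z byz) := by
      rw [e3, ← hsplit]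
      have h2 : 0 ≤ (h - f y) / (h - f z) := le_of_lt (div_pos (by linarith) (by linarith))
      exact mul_le_mul k1 k2 h2 p1.le
    calc Real.log (dist x bxz / dist z bxz)
        ≤ Real.log ((dist x bxy / dist y bxy) * (dist y byz / dist z byz)) :=
          Real.log_le_log p3 hprod
      _ = _ := Real.log_mul (ne_of_gt p1) (ne_of_gt p2)
  · -- asymmetry example: unit ball
    set e : EuclideanSpace ℝ (Fin 2) := EuclideanSpace.single 0 1 with he
    have hne : ‖e‖ = 1 := by simp [he, EuclideanSpace.norm_single]
    have he0 : e ≠ 0 := by intro h; rw [h, norm_zero] at hne; norm_num at hne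
    refine ⟨Metric.ball 0 1, convex_ball 0 1, Metric.isOpen_ball, Metric.isBounded_ball,
      0, (1/2 : ℝ) • e, e, -e, ?_, ?_, ?_, ?_, ?_, ?_, ?_, ?_⟩
    · simp
    · rw [Metric.mem_ball, dist_zero_right, norm_smul, hne]
      norm_num
    · intro h
      apply he0
      have := congrArg (fun v => (2:ℝ) • v) h
      simpa using this.symm
    · rw [frontier_ball (0 : EuclideanSpace ℝ (Fin 2)) one_ne_zero,
        mem_sphere_iff_norm, sub_zero, hne]
    · rw [frontier_ball (0 : EuclideanSpace ℝ (Fin 2)) one_ne_zero,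
        mem_sphere_iff_norm, sub_zero, norm_neg, hne]
    · refine mem_segment_iff_wbtw.1 ⟨1/2, 1/2, by norm_num, by norm_num, by norm_num, ?_⟩
      module
    · refine mem_segment_iff_wbtw.1 ⟨2/3, 1/3, by norm_num, by norm_num, by norm_num, ?_⟩
      module
    · have d1 : dist (0 : EuclideanSpace ℝ (Fin 2)) e = 1 := by
        rw [dist_zero_left, hne]
      have d2 : dist ((1/2 : ℝ) • e) e = 1/2 := by
        have : (1/2 : ℝ) • e - e = (-(1/2) : ℝ) • e := by module
        rw [dist_eq_norm, this, norm_smul, hne]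
        norm_num
      have d3 : dist ((1/2 : ℝ) • e) (-e) = 3/2 := by
        have : (1/2 : ℝ) • e - (-e) = ((3/2) : ℝ) • e := by module
        rw [dist_eq_norm, this, norm_smul, hne]
        norm_num
      have d4 : dist (0 : EuclideanSpace ℝ (Fin 2)) (-e) = 1 := by
        rw [dist_zero_left, norm_neg, hne]
      rw [d1, d2, d3, d4]
      norm_num
      intro h
      have := Real.log_injOn_pos (by norm_num : (2:ℝ) ∈ Set.Ioi 0)
        (by norm_num : (3/2:ℝ) ∈ Set.Ioi 0) h
      norm_num at this
end

section
/- Hilbert's metric on the open unit disc coincides with the Beltrami–Klein model of the hyperbolic plane: for points x, y in the open unit disc, d_H(x,y) = (1/2)·ln of the cross-ratio (|y-a|·|x-b|)/(|y-b|·|x-a|) (with a, b the intersections of line xy with the unit circle, in the order a, x, y, b) equals arcosh of (1 - ⟨x,y⟩)/( sqrt(1-|x|²)·sqrt(1-|y|²) ). -/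
open scoped RealInnerProductSpace

/-- Hilbert's metric on the open unit disc is the Beltrami–Klein model of the hyperbolic
plane: for `x ≠ y` in the open unit disc, with `a, b` the intersections of the line `xy`
with the unit circle in the order `a, x, y, b`, the Hilbert distance
`d = (1/2) ln((|y-a||x-b|)/(|y-b||x-a|))` satisfies `d = arcosh` of
`(1 - ⟨x,y⟩)/(√(1-|x|²)·√(1-|y|²))`; equivalently (as `d ≥ 0` and `arcosh` is the inverse
of `cosh` on `[0,∞)`), `cosh d` equals that quantity and `d ≥ 0`. -/
theorem stmt_11 (x y : EuclideanSpace ℝ (Fin 2)) (hx : ‖x‖ < 1) (hy : ‖y‖ < 1)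
    (hxy : x ≠ y) (a b : EuclideanSpace ℝ (Fin 2)) (ha : ‖a‖ = 1) (hb : ‖b‖ = 1)
    (horda : Wbtw ℝ a x y) (hordb : Wbtw ℝ x y b) :
    0 ≤ (1 / 2) * Real.log ((dist y a * dist x b) / (dist y b * dist x a)) ∧
    Real.cosh ((1 / 2) * Real.log ((dist y a * dist x b) / (dist y b * dist x a))) =
      (1 - ⟪x, y⟫) / (Real.sqrt (1 - ‖x‖ ^ 2) * Real.sqrt (1 - ‖y‖ ^ 2)) := by
  set u : EuclideanSpace ℝ (Fin 2) := y - x with hu_def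
  have hu : u ≠ 0 := sub_ne_zero.mpr (Ne.symm hxy)
  have hP : (0:ℝ) < ‖u‖ := norm_pos_iff.mpr hu
  -- get the ray coefficients
  have hra : SameRay ℝ (x - a) u := by
    have := wbtw_iff_sameRay_vsub.mp horda
    simpa [vsub_eq_sub] using this
  have hrb : SameRay ℝ u (b - y) := by
    have := wbtw_iff_sameRay_vsub.mp hordb
    simpa [vsub_eq_sub] using this
  obtain ⟨c, hc, hca⟩ := hra.exists_nonneg_right hu
  obtain ⟨c', hc', hcb⟩ := hrb.exists_nonneg_left hu
  -- c, c' are positive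
  have hc0 : 0 < c := by
    rcases lt_or_eq_of_le hc with h | h
    · exact h
    · exfalso
      have : x - a = 0 := by rw [hca, ← h, zero_smul]
      have hax : a = x := (sub_eq_zero.mp this).symm
      rw [← hax, ha] at hx
      exact lt_irrefl 1 hx
  have hc'0 : 0 < c' := by
    rcases lt_or_eq_of_le hc' with h | h
    · exact h
    · exfalso
      have : b - y = 0 := by rw [← hcb, ← h, zero_smul]
      have hby : b = y := sub_eq_zero.mp this
      rw [← hby, hb] at hy
      exact lt_irrefl 1 hy
  have ha' : a = x - c • u := by rw [← hca]; abel
  have hb' : b = y + c' • u := by rw [hcb]; abel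
  have hyx : y = x + u := by rw [hu_def]; abel
  -- norm equations
  have hA2 : ‖x‖ ^ 2 - 2 * (c * ⟪x, u⟫) + c ^ 2 * ‖u‖ ^ 2 = 1 := by
    have h1 : ‖a‖ ^ 2 = 1 := by rw [ha]; norm_num
    rw [ha', norm_sub_sq_real, real_inner_smul_right, norm_smul, Real.norm_eq_abs,
      abs_of_nonneg hc, mul_pow] at h1
    linarith
  have hB2 : ‖y‖ ^ 2 + 2 * (c' * ⟪y, u⟫) + c' ^ 2 * ‖u‖ ^ 2 = 1 := by
    have h1 : ‖b‖ ^ 2 = 1 := by rw [hb]; norm_num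
    rw [hb', norm_add_sq_real, real_inner_smul_right, norm_smul, Real.norm_eq_abs,
      abs_of_nonneg hc', mul_pow] at h1
    linarith
  have hY2 : ‖y‖ ^ 2 = ‖x‖ ^ 2 + 2 * ⟪x, u⟫ + ‖u‖ ^ 2 := by
    rw [hyx, norm_add_sq_real]
  have hYU : ⟪y, u⟫ = ⟪x, u⟫ + ‖u‖ ^ 2 := by
    rw [hyx, inner_add_left, real_inner_self_eq_norm_sq]
  -- solve for the inner product
  have key : (1 + c + c') * (2 * ⟪x, u⟫ + (1 + c' - c) * ‖u‖ ^ 2) = 0 := by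
    rw [hY2, hYU] at hB2
    linear_combination hB2 - hA2
  have hT : ⟪x, u⟫ = -((1 + c' - c) * ‖u‖ ^ 2) / 2 := by
    have hpos : (1 + c + c') ≠ 0 := by positivity
    have := (mul_eq_zero.mp key).resolve_left hpos
    linarith
  have hX : 1 - ‖x‖ ^ 2 = c * (1 + c') * ‖u‖ ^ 2 := by
    linear_combination -hA2 - 2 * c * hT
  have hYv : 1 - ‖y‖ ^ 2 = c' * (1 + c) * ‖u‖ ^ 2 := by
    rw [hY2]
    linear_combination -hA2 - (2 * c + 2) * hT
  have hXY : 1 - ⟪x, y⟫ = (1 + c + c' + 2 * c * c') * ‖u‖ ^ 2 / 2 := by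
    have h1 : ⟪x, y⟫ = ‖x‖ ^ 2 + ⟪x, u⟫ := by
      rw [hyx, inner_add_right, real_inner_self_eq_norm_sq]
    rw [h1]
    linear_combination -hA2 - (2 * c + 1) * hT
  -- distances
  have d1 : dist y a = (1 + c) * ‖u‖ := by
    have h : y - a = (1 + c) • u := by
      rw [ha', hyx]; module
    rw [dist_eq_norm, h, norm_smul, Real.norm_eq_abs, abs_of_nonneg (by linarith)]
  have d2 : dist x b = (1 + c') * ‖u‖ := by
    have h : x - b = -((1 + c') • u) := by
      rw [hb', hyx]; module
    rw [dist_eq_norm, h, norm_neg, norm_smul, Real.norm_eq_abs, abs_of_nonneg (by linarith)]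
  have d3 : dist y b = c' * ‖u‖ := by
    have h : y - b = -(c' • u) := by rw [hb']; module
    rw [dist_eq_norm, h, norm_neg, norm_smul, Real.norm_eq_abs, abs_of_nonneg hc']
  have d4 : dist x a = c * ‖u‖ := by
    have h : x - a = c • u := hca
    rw [dist_eq_norm, h, norm_smul, Real.norm_eq_abs, abs_of_nonneg hc]
  have hcr : (dist y a * dist x b) / (dist y b * dist x a)
      = ((1 + c) * (1 + c')) / (c * c') := by
    rw [d1, d2, d3, d4]
    field_simp
  rw [hcr]
  set R : ℝ := ((1 + c) * (1 + c')) / (c * c') with hR_def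
  have hR1 : 1 ≤ R := by
    rw [hR_def]
    rw [le_div_iff₀ (by positivity)]
    nlinarith
  have hR0 : 0 < R := lt_of_lt_of_le one_pos hR1
  constructor
  · have := Real.log_nonneg hR1
    linarith
  · have hhalf : (1 / 2 : ℝ) * Real.log R = Real.log (Real.sqrt R) := by
      rw [Real.log_sqrt hR0.le]; ring
    rw [hhalf, Real.cosh_log (Real.sqrt_pos.mpr hR0)]
    set s : ℝ := Real.sqrt (c * c') with hs_def
    set t : ℝ := Real.sqrt ((1 + c) * (1 + c')) with ht_def
    have hs2 : s ^ 2 = c * c' := Real.sq_sqrt (by positivity)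
    have ht2 : t ^ 2 = (1 + c) * (1 + c') := Real.sq_sqrt (by positivity)
    have hs : 0 < s := Real.sqrt_pos.mpr (by positivity)
    have ht : 0 < t := Real.sqrt_pos.mpr (by positivity)
    have hRst : Real.sqrt R = t / s := by
      rw [show R = (t / s) ^ 2 by rw [div_pow, hs2, ht2]]
      exact Real.sqrt_sq (by positivity)
    have hden : Real.sqrt (1 - ‖x‖ ^ 2) * Real.sqrt (1 - ‖y‖ ^ 2) = s * t * ‖u‖ ^ 2 := by
      rw [hX, hYv, ← Real.sqrt_mul (by positivity)]
      rw [show c * (1 + c') * ‖u‖ ^ 2 * (c' * (1 + c) * ‖u‖ ^ 2) = (s * t * ‖u‖ ^ 2) ^ 2 by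
        rw [mul_pow, mul_pow, hs2, ht2]; ring]
      exact Real.sqrt_sq (by positivity)
    rw [hRst, hden, hXY]
    rw [show (1 + c + c' + 2 * c * c') * ‖u‖ ^ 2 / 2 = (t ^ 2 + s ^ 2) * ‖u‖ ^ 2 / 2 by
      rw [hs2, ht2]; ring]
    field_simp
end

section
/- (Existence of n-bounce billiard trajectories) Let γ be a smooth strictly convex closed curve in the plane, let O and A be points strictly inside γ, and let F be a continuous, positively homogeneous length functional on segments satisfying the strict triangle inequality (e.g. a projective Finsler length). Then the function F(x₁,…,xₙ) = len(O x₁) + len(x₁ x₂) + ⋯ + len(xₙ A) on γⁿ attains its maximum, and at any maximum point all consecutive points are distinct: x_i ≠ x_{i+1} for all i (with x₀ = O, x_{n+1} = A). -/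
open scoped BigOperators

/-- The total length of the polygonal path `O x₁ … xₙ A` with respect to a length
functional `len` on segments. -/
noncomputable def pathLen {n : ℕ}
    (len : EuclideanSpace ℝ (Fin 2) → EuclideanSpace ℝ (Fin 2) → ℝ)
    (O A : EuclideanSpace ℝ (Fin 2)) (x : Fin n → EuclideanSpace ℝ (Fin 2)) : ℝ :=
  ∑ i : Fin (n + 1),
    len ((Fin.cons O (Fin.snoc x A) : Fin (n + 2) → EuclideanSpace ℝ (Fin 2)) i.castSucc)
      ((Fin.cons O (Fin.snoc x A) : Fin (n + 2) → EuclideanSpace ℝ (Fin 2)) i.succ)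

private abbrev E2 := EuclideanSpace ℝ (Fin 2)

private lemma ray_hits_frontier {K : Set E2} (hKc : IsCompact K)
    {O : E2} (hO : O ∈ interior K) (u : E2) (hu : u ≠ 0) :
    ∃ t : ℝ, 0 < t ∧ O + t • u ∈ frontier K := by
  set S : Set ℝ := {t | O + t • u ∈ K} with hSdef
  have hmapc : Continuous fun t : ℝ => O + t • u := by continuity
  have hSc : IsClosed S := hKc.isClosed.preimage hmapc
  obtain ⟨r, hr⟩ := hKc.isBounded.subset_closedBall 0
  have hupos : 0 < ‖u‖ := norm_pos_iff.mpr hu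
  have hSb : Bornology.IsBounded S := by
    have hsub : S ⊆ Metric.closedBall (0:ℝ) ((r + ‖O‖) / ‖u‖) := by
      intro t ht
      have h1 : ‖O + t • u‖ ≤ r := by simpa using hr ht
      have h2 : ‖t • u‖ ≤ r + ‖O‖ := by
        have h3 := norm_sub_le (O + t • u) O
        simp only [add_sub_cancel_left] at h3
        linarith
      rw [norm_smul] at h2
      simp only [Metric.mem_closedBall, dist_zero_right, Real.norm_eq_abs]
      rw [le_div_iff₀ hupos]
      simpa using h2
    exact Metric.isBounded_closedBall.subset hsub
  have hScomp : IsCompact S := Metric.isCompact_of_isClosed_isBounded hSc hSb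
  have h0S : (0:ℝ) ∈ S := by
    simp only [hSdef, Set.mem_setOf_eq, zero_smul, add_zero]
    exact interior_subset hO
  have hbdd : BddAbove S := hSb.bddAbove
  set T := sSup S with hTdef
  have hTS : T ∈ S := hScomp.sSup_mem ⟨0, h0S⟩
  obtain ⟨ε, hε, hball⟩ := Metric.isOpen_iff.mp isOpen_interior O hO
  have htpos : (0:ℝ) < ε / (2 * ‖u‖) := by positivity
  have hTpos : 0 < T := by
    have hmem : ε / (2 * ‖u‖) ∈ S := by
      have hdist : dist (O + (ε / (2 * ‖u‖)) • u) O < ε := by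
        rw [dist_eq_norm]
        simp only [add_sub_cancel_left, norm_smul, Real.norm_eq_abs, abs_of_pos htpos]
        have hh : ε / (2 * ‖u‖) * ‖u‖ = ε / 2 := by
          field_simp
        rw [hh]; linarith
      simp only [hSdef, Set.mem_setOf_eq]
      exact interior_subset (hball hdist)
    exact lt_of_lt_of_le htpos (le_csSup hbdd hmem)
  refine ⟨T, hTpos, ?_⟩
  rw [frontier, hKc.isClosed.closure_eq]
  refine ⟨hTS, fun hint => ?_⟩
  obtain ⟨δ, hδ, hball2⟩ := Metric.isOpen_iff.mp isOpen_interior _ hint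
  have hδu : (0:ℝ) < δ / (2 * ‖u‖) := by positivity
  have hmem : T + δ / (2 * ‖u‖) ∈ S := by
    have hdist : dist (O + (T + δ / (2 * ‖u‖)) • u) (O + T • u) < δ := by
      rw [dist_eq_norm]
      have heq : O + (T + δ / (2 * ‖u‖)) • u - (O + T • u) = (δ / (2 * ‖u‖)) • u := by
        rw [add_smul]; abel
      rw [heq, norm_smul, Real.norm_eq_abs, abs_of_pos hδu]
      have hh : δ / (2 * ‖u‖) * ‖u‖ = δ / 2 := by
        field_simp
      rw [hh]; linarith
    simp only [hSdef, Set.mem_setOf_eq]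
    exact interior_subset (hball2 hdist)
  have := le_csSup hbdd hmem
  linarith

private lemma exists_frontier_off_segment {K : Set E2} (hKc : IsCompact K)
    {O : E2} (hO : O ∈ interior K) (P R : E2) :
    ∃ Q ∈ frontier K, Q ∉ segment ℝ P R := by
  by_contra hcon
  push_neg at hcon
  set e1 : E2 := EuclideanSpace.single 0 1 with he1
  set e2 : E2 := EuclideanSpace.single 1 1 with he2
  have he1ne : e1 ≠ 0 := by
    intro h
    have := congrArg (fun v : E2 => v 0) h
    simp [he1, EuclideanSpace.single_apply] at this
  have he2ne : e2 ≠ 0 := by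
    intro h
    have := congrArg (fun v : E2 => v 1) h
    simp [he2, EuclideanSpace.single_apply] at this
  obtain ⟨t1, ht1, hQ1⟩ := ray_hits_frontier hKc hO e1 he1ne
  obtain ⟨t2, ht2, hQ2⟩ := ray_hits_frontier hKc hO (-e1) (neg_ne_zero.mpr he1ne)
  obtain ⟨t3, ht3, hQ3⟩ := ray_hits_frontier hKc hO e2 he2ne
  obtain ⟨t4, ht4, hQ4⟩ := ray_hits_frontier hKc hO (-e2) (neg_ne_zero.mpr he2ne)
  rw [segment_eq_image'] at hcon
  obtain ⟨s1, _, hs1'⟩ := hcon _ hQ1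
  obtain ⟨s2, _, hs2'⟩ := hcon _ hQ2
  obtain ⟨s3, _, hs3'⟩ := hcon _ hQ3
  obtain ⟨s4, _, hs4'⟩ := hcon _ hQ4
  have hs1 : P + s1 • (R - P) = O + t1 • e1 := hs1'
  have hs2 : P + s2 • (R - P) = O + t2 • (-e1) := hs2'
  have hs3 : P + s3 • (R - P) = O + t3 • e2 := hs3'
  have hs4 : P + s4 • (R - P) = O + t4 • (-e2) := hs4' 
  have hd1 : (t1 + t2) • e1 = (s1 - s2) • (R - P) :=
    calc (t1 + t2) • e1 = (O + t1 • e1) - (O + t2 • (-e1)) := by module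
    _ = (P + s1 • (R - P)) - (P + s2 • (R - P)) := by rw [← hs1, ← hs2]
    _ = (s1 - s2) • (R - P) := by module
  have hd2 : (t3 + t4) • e2 = (s3 - s4) • (R - P) :=
    calc (t3 + t4) • e2 = (O + t3 • e2) - (O + t4 • (-e2)) := by module
    _ = (P + s3 • (R - P)) - (P + s4 • (R - P)) := by rw [← hs3, ← hs4]
    _ = (s3 - s4) • (R - P) := by module
  have hco : ((s3 - s4) * (t1 + t2)) • e1 = ((s1 - s2) * (t3 + t4)) • e2 := by
    rw [mul_smul, mul_smul, hd1, hd2, smul_comm]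
  have ha : (s3 - s4) * (t1 + t2) = 0 := by
    have h0 := congrArg (fun v : E2 => v 0) hco
    simp [he1, he2, EuclideanSpace.single_apply] at h0
    simpa using h0
  have hs34 : s3 - s4 = 0 := by
    rcases mul_eq_zero.mp ha with h | h
    · exact h
    · linarith
  rw [hs34, zero_smul] at hd2
  rcases smul_eq_zero.mp hd2 with h | h
  · linarith
  · exact he2ne h

/-- Existence of `n`-bounce billiard trajectories: for a strictly convex billiard table
with boundary `γ = ∂K`, points `O, A` strictly inside, and a continuous, positively
homogeneous length functional `len` satisfying the (strict) triangle inequality, the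
function `(x₁,…,xₙ) ↦ len(Ox₁)+len(x₁x₂)+⋯+len(xₙA)` on `γⁿ` attains its maximum, and at
any maximum all consecutive points of the path `O x₁ … xₙ A` are distinct. -/
theorem stmt_12 (n : ℕ) (hn : 1 ≤ n) (K : Set (EuclideanSpace ℝ (Fin 2)))
    (hKc : IsCompact K) (hKs : StrictConvex ℝ K)
    (O A : EuclideanSpace ℝ (Fin 2)) (hO : O ∈ interior K) (hA : A ∈ interior K)
    (len : EuclideanSpace ℝ (Fin 2) → EuclideanSpace ℝ (Fin 2) → ℝ)
    (hcont : Continuous fun q : EuclideanSpace ℝ (Fin 2) × EuclideanSpace ℝ (Fin 2) =>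
      len q.1 q.2)
    (hhom : ∀ (P Q : EuclideanSpace ℝ (Fin 2)), ∀ s ∈ Set.Icc (0 : ℝ) 1,
      len P (P + s • (Q - P)) = s * len P Q)
    (htri : ∀ P Q R : EuclideanSpace ℝ (Fin 2), len P R ≤ len P Q + len Q R)
    (hstri : ∀ P Q R : EuclideanSpace ℝ (Fin 2), Q ∉ segment ℝ P R →
      len P R < len P Q + len Q R) :
    (∃ x : Fin n → EuclideanSpace ℝ (Fin 2), (∀ i, x i ∈ frontier K) ∧
      ∀ y : Fin n → EuclideanSpace ℝ (Fin 2), (∀ i, y i ∈ frontier K) →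
        pathLen len O A y ≤ pathLen len O A x) ∧
    (∀ x : Fin n → EuclideanSpace ℝ (Fin 2), (∀ i, x i ∈ frontier K) →
      (∀ y : Fin n → EuclideanSpace ℝ (Fin 2), (∀ i, y i ∈ frontier K) →
        pathLen len O A y ≤ pathLen len O A x) →
      ∀ i : Fin (n + 1),
        (Fin.cons O (Fin.snoc x A) : Fin (n + 2) → EuclideanSpace ℝ (Fin 2)) i.castSucc ≠
          (Fin.cons O (Fin.snoc x A) : Fin (n + 2) → EuclideanSpace ℝ (Fin 2)) i.succ) := by
  have hfrK : IsCompact (frontier K) :=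
    hKc.of_isClosed_subset isClosed_frontier (hKc.isClosed.frontier_subset)
  have hfrne : (frontier K).Nonempty := by
    rcases Set.eq_empty_or_nonempty (frontier K) with h | h
    · exfalso
      have hclopen : IsClopen K := isClopen_iff_frontier_eq_empty.mpr h
      have huniv : K = Set.univ := hclopen.eq_univ ⟨O, interior_subset hO⟩
      exact hKc.ne_univ huniv
    · exact h
  -- frontier membership excludes interior
  have hfr_not_int : ∀ z : E2, z ∈ frontier K → z ∉ interior K := by
    intro z hz
    rw [frontier] at hz
    exact hz.2
  -- len of degenerate segment
  have hlen_self : ∀ P : E2, len P P = 0 := by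
    intro P
    have := hhom P P 0 ⟨le_refl 0, zero_le_one⟩
    simpa using this
  -- continuity of pathLen
  have hcpt : ∀ p : Fin (n+2), Continuous fun x : Fin n → E2 =>
      (Fin.cons O (Fin.snoc x A) : Fin (n + 2) → E2) p := by
    intro p
    refine Fin.cases ?_ ?_ p
    · simpa using continuous_const (y := O)
    · intro q
      simp only [Fin.cons_succ]
      refine Fin.lastCases ?_ ?_ q
      · simpa using continuous_const (y := A)
      · intro j
        simpa using continuous_apply j
  have hplc : Continuous fun x : Fin n → E2 => pathLen len O A x := by
    unfold pathLen
    refine continuous_finset_sum _ fun k _ => ?_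
    exact hcont.comp ((hcpt k.castSucc).prodMk (hcpt k.succ))
  -- the second part: any maximizer has distinct consecutive points
  have hmaxdist : ∀ x : Fin n → EuclideanSpace ℝ (Fin 2), (∀ i, x i ∈ frontier K) →
      (∀ y : Fin n → EuclideanSpace ℝ (Fin 2), (∀ i, y i ∈ frontier K) →
        pathLen len O A y ≤ pathLen len O A x) →
      ∀ i : Fin (n + 1),
        (Fin.cons O (Fin.snoc x A) : Fin (n + 2) → EuclideanSpace ℝ (Fin 2)) i.castSucc ≠
          (Fin.cons O (Fin.snoc x A) : Fin (n + 2) → EuclideanSpace ℝ (Fin 2)) i.succ := by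
    intro x hx hmax i heq
    set c : Fin (n + 2) → E2 := Fin.cons O (Fin.snoc x A) with hc
    have : NeZero n := ⟨by omega⟩
    by_cases hi0 : i = 0
    · -- O = x 0, impossible
      subst hi0
      have h1 : c (Fin.castSucc 0) = O := by
        simp [hc]
      have h2 : c (Fin.succ 0) = x 0 := by
        have h0 : (0 : Fin (n+1)) = Fin.castSucc (0 : Fin n) := by
          simp
        rw [hc, Fin.cons_succ, h0, Fin.snoc_castSucc]
      rw [h1, h2] at heq
      exact hfr_not_int (x 0) (hx 0) (heq ▸ hO)
    · have hcs : c i.castSucc = x (i.pred hi0) := by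
        have h1 : i.castSucc = ((i.pred hi0).castSucc).succ := by
          rw [Fin.succ_castSucc, Fin.succ_pred]
        rw [h1, hc, Fin.cons_succ, Fin.snoc_castSucc]
      by_cases hil : i = Fin.last n
      · -- x (pred i) = A, impossible
        have h2 : c i.succ = A := by
          rw [hil, hc, Fin.succ_last, ← Fin.succ_last, Fin.cons_succ, Fin.snoc_last]
        rw [hcs, h2] at heq
        exact hfr_not_int _ (hx (i.pred hi0)) (heq ▸ hA)
      · -- interior bounce collapsed: contradiction with maximality
        set j : Fin n := i.castPred hil with hjdef
        set j' : Fin n := i.pred hi0 with hj'def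
        have hij : i = j.castSucc := (Fin.castSucc_castPred i hil).symm
        have hsc : c i.succ = x j := by
          rw [hc, Fin.cons_succ, hij, Fin.snoc_castSucc]
        rw [hcs, hsc] at heq
        set R : E2 := c ((j.succ : Fin (n+1)).succ) with hR
        obtain ⟨Q, hQfr, hQseg⟩ := exists_frontier_off_segment hKc hO (x j) R
        set y : Fin n → E2 := Function.update x j Q with hy
        have hyfr : ∀ k, y k ∈ frontier K := by
          intro k
          by_cases hk : k = j
          · rw [hy, hk, Function.update_self]; exact hQfr
          · rw [hy, Function.update_of_ne hk]; exact hx k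
        set cy : Fin (n + 2) → E2 := Fin.cons O (Fin.snoc y A) with hcy
        -- cy agrees with c except at position j.castSucc.succ
        have hagree : ∀ p : Fin (n+2), p ≠ (j.castSucc).succ → cy p = c p := by
          intro p
          refine Fin.cases ?_ ?_ p
          · intro _; simp [hcy, hc]
          · intro q hq
            rw [hcy, hc, Fin.cons_succ, Fin.cons_succ]
            revert hq
            refine Fin.lastCases ?_ ?_ q
            · intro _; simp
            · intro m hm'
              rw [Fin.snoc_castSucc, Fin.snoc_castSucc]
              have hm : m ≠ j := by
                intro h
                exact hm' (by rw [h])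
              rw [hy, Function.update_of_ne hm]
        -- endpoint values
        have hne1 : (j.castSucc.castSucc : Fin (n+2)) ≠ j.castSucc.succ :=
          (Fin.castSucc_lt_succ).ne
        have hne4 : ((j.succ : Fin (n+1)).succ : Fin (n+2)) ≠ j.castSucc.succ := by
          intro h
          exact (Fin.castSucc_lt_succ (i := j)).ne' (Fin.succ_injective _ h)
        have e1x : c (j.castSucc.castSucc) = x (i.pred hi0) := by
          rw [← hij]; exact hcs
        have e2x : c (j.castSucc.succ) = x j := by
          rw [hc, Fin.cons_succ, Fin.snoc_castSucc]
        have e3x : c ((j.succ : Fin (n+1)).castSucc) = x j := by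
          rw [← Fin.succ_castSucc]; exact e2x
        have e4x : c ((j.succ : Fin (n+1)).succ) = R := hR.symm
        have e1y : cy (j.castSucc.castSucc) = x (i.pred hi0) := by
          rw [hagree _ hne1]; exact e1x
        have e2y : cy (j.castSucc.succ) = Q := by
          rw [hcy, Fin.cons_succ, Fin.snoc_castSucc, hy, Function.update_self]
        have e3y : cy ((j.succ : Fin (n+1)).castSucc) = Q := by
          rw [← Fin.succ_castSucc]; exact e2y
        have e4y : cy ((j.succ : Fin (n+1)).succ) = R := by
          rw [hagree _ hne4, ← hR]
        -- the summands
        set f : (Fin n → E2) → Fin (n+1) → ℝ := fun x' k =>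
          len ((Fin.cons O (Fin.snoc x' A) : Fin (n+2) → E2) k.castSucc)
              ((Fin.cons O (Fin.snoc x' A) : Fin (n+2) → E2) k.succ) with hf
        have hpl : ∀ x' : Fin n → E2, pathLen len O A x' = ∑ k : Fin (n+1), f x' k :=
          fun _ => rfl
        have hnejj : (j.castSucc : Fin (n+1)) ≠ j.succ := (Fin.castSucc_lt_succ (i := j)).ne
        have hfx1 : f x j.castSucc = 0 := by
          show len (c (j.castSucc.castSucc)) (c (j.castSucc.succ)) = 0
          rw [e1x, e2x, heq, hlen_self]
        have hfx2 : f x j.succ = len (x j) R := by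
          show len (c ((j.succ : Fin (n+1)).castSucc)) (c ((j.succ : Fin (n+1)).succ)) = _
          rw [e3x, e4x]
        have hfy1 : f y j.castSucc = len (x j) Q := by
          show len (cy (j.castSucc.castSucc)) (cy (j.castSucc.succ)) = _
          rw [e1y, e2y, heq]
        have hfy2 : f y j.succ = len Q R := by
          show len (cy ((j.succ : Fin (n+1)).castSucc)) (cy ((j.succ : Fin (n+1)).succ)) = _
          rw [e3y, e4y]
        have hkey : f x j.castSucc + f x j.succ < f y j.castSucc + f y j.succ := by
          rw [hfx1, hfx2, hfy1, hfy2, zero_add]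
          exact hstri (x j) Q R hQseg
        have hterm : ∀ k ∈ Finset.univ \ ({j.castSucc, j.succ} : Finset (Fin (n+1))),
            f x k = f y k := by
          intro k hk
          simp only [Finset.mem_sdiff, Finset.mem_insert, Finset.mem_singleton,
            Finset.mem_univ, true_and] at hk
          push_neg at hk
          obtain ⟨hk1, hk2⟩ := hk
          have hp1 : (k.castSucc : Fin (n+2)) ≠ j.castSucc.succ := by
            intro h
            rw [Fin.succ_castSucc] at h
            exact hk2 (Fin.castSucc_injective _ h)
          have hp2 : (k.succ : Fin (n+2)) ≠ j.castSucc.succ := by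
            intro h
            exact hk1 (Fin.succ_injective _ h)
          show len (c k.castSucc) (c k.succ) = len (cy k.castSucc) (cy k.succ)
          rw [hagree _ hp1, hagree _ hp2]
        have hlt : pathLen len O A x < pathLen len O A y := by
          rw [hpl x, hpl y,
            ← Finset.sum_sdiff (Finset.subset_univ ({j.castSucc, j.succ} : Finset (Fin (n+1)))) (f := f x),
            ← Finset.sum_sdiff (Finset.subset_univ ({j.castSucc, j.succ} : Finset (Fin (n+1)))) (f := f y),
            Finset.sum_pair hnejj, Finset.sum_pair hnejj,
            Finset.sum_congr rfl hterm]
          exact add_lt_add_of_le_of_lt le_rfl hkey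
        exact absurd (hmax y hyfr) (not_le.mpr hlt)
  refine ⟨?_, hmaxdist⟩
  -- existence of maximizer
  have hSc : IsCompact (Set.univ.pi fun _ : Fin n => frontier K) :=
    isCompact_univ_pi fun _ => hfrK
  obtain ⟨z, hz⟩ := hfrne
  have hSne : (Set.univ.pi fun _ : Fin n => frontier K).Nonempty :=
    ⟨fun _ => z, fun i _ => hz⟩
  obtain ⟨x, hxS, hxmax⟩ := hSc.exists_isMaxOn hSne (hplc.continuousOn)
  refine ⟨x, fun i => hxS i (Set.mem_univ i), fun y hy => ?_⟩
  exact hxmax (fun i _ => hy i)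
end

section
/- In a billiard inside a circle of radius R in the Euclidean plane with source O at distance d < R from the center, the n-th caustic by reflection has exactly four cusps for every n ≥ 1 when d ≠ 0; equivalently, for the one-parameter family of chords obtained from the pencil through O after n reflections, the curve C_n in the (α,p)-cylinder has exactly four inflection-type tangencies with the sine curves p = a sin α - b cos α. -/
private lemma aux_card_four (a b c : ℝ) (h0 : 0 < a) (hab : a < b) (hbc : b < c) :
    ({0, a, b, c} : Set ℝ).ncard = 4 := by
  rw [Set.ncard_insert_of_notMem (by
        simp only [Set.mem_insert_iff, Set.mem_singleton_iff]
        push_neg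
        exact ⟨by linarith, by linarith, by linarith⟩)
      (((Set.finite_singleton c).insert b).insert a)]
  rw [Set.ncard_insert_of_notMem (by
        simp only [Set.mem_insert_iff, Set.mem_singleton_iff]
        push_neg
        exact ⟨by linarith, by linarith⟩)
      ((Set.finite_singleton c).insert b)]
  rw [Set.ncard_insert_of_notMem (by
        simp only [Set.mem_singleton_iff]
        intro h; linarith)
      (Set.finite_singleton c)]
  rw [Set.ncard_singleton]

/-- Exactly four cusps for caustics by reflection in a circle: for the billiard in a circle
of radius `R` with source `O` at distance `d` from the center, `0 < d < R`, the chord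
through `O` with direction angle `φ` has line coordinates `p = -d sin φ`, and after each
reflection the direction rotates by the central angle `2 arccos(d sin φ / R)` while `p` is
preserved; so the `n`-times reflected family is `C_n(φ) = (φ + n·2·arccos(d sin φ / R),
-d sin φ)` in the `(α,p)`-cylinder. Cusps of the `n`-th caustic correspond to inflection
tangencies of `C_n` with the sine curves `p = a sin α - b cos α`, i.e. (parametrically) to
zeros of `p''·α' - p'·α'' + p·(α')³`. For every `n ≥ 1` there are exactly four such points
per period. -/
theorem stmt_16 (R d : ℝ) (hd : 0 < d) (hdR : d < R) (n : ℕ) (hn : 1 ≤ n) :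
    let A : ℝ → ℝ := fun φ => φ + (n : ℝ) * (2 * Real.arccos (d * Real.sin φ / R))
    let P : ℝ → ℝ := fun φ => -d * Real.sin φ
    let E : ℝ → ℝ := fun φ =>
      deriv (deriv P) φ * deriv A φ - deriv P φ * deriv (deriv A) φ +
        P φ * (deriv A φ) ^ 3
    {φ ∈ Set.Ico 0 (2 * Real.pi) | E φ = 0}.ncard = 4 := by
  intro A P E
  have hR : 0 < R := hd.trans hdR
  set S : ℝ → ℝ := fun φ => Real.sqrt (R ^ 2 - d ^ 2 * Real.sin φ ^ 2) with hSdef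
  have hpos : ∀ φ : ℝ, 0 < R ^ 2 - d ^ 2 * Real.sin φ ^ 2 := by
    intro φ
    nlinarith [Real.sin_sq_le_one φ, sq_nonneg (Real.sin φ)]
  have hS0 : ∀ φ, 0 < S φ := fun φ => Real.sqrt_pos.2 (hpos φ)
  have hSsq : ∀ φ, S φ ^ 2 = R ^ 2 - d ^ 2 * Real.sin φ ^ 2 :=
    fun φ => Real.sq_sqrt (hpos φ).le
  have habs : ∀ φ : ℝ, |d * Real.sin φ / R| < 1 := by
    intro φ
    rw [abs_div, abs_of_pos hR, div_lt_one hR, abs_mul, abs_of_pos hd]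
    calc d * |Real.sin φ| ≤ d * 1 := by
          have := Real.abs_sin_le_one φ
          nlinarith
      _ < R := by linarith
  have hne1 : ∀ φ : ℝ, d * Real.sin φ / R ≠ 1 := fun φ => by
    have := habs φ; intro h; rw [h] at this; simp at this
  have hnem1 : ∀ φ : ℝ, d * Real.sin φ / R ≠ -1 := fun φ => by
    have := habs φ; intro h; rw [h] at this; simp at this
  have hsq1 : ∀ φ : ℝ, Real.sqrt (1 - (d * Real.sin φ / R) ^ 2) = S φ / R := by
    intro φ
    rw [show 1 - (d * Real.sin φ / R) ^ 2 = (R ^ 2 - d ^ 2 * Real.sin φ ^ 2) / R ^ 2 by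
      field_simp]
    rw [Real.sqrt_div (hpos φ).le, Real.sqrt_sq hR.le]
  -- derivative of A
  have hA' : ∀ φ : ℝ, HasDerivAt A (1 - 2 * n * d * Real.cos φ / S φ) φ := by
    intro φ
    have hu : HasDerivAt (fun φ : ℝ => d * Real.sin φ / R) (d * Real.cos φ / R) φ :=
      ((Real.hasDerivAt_sin φ).const_mul d).div_const R
    have harc : HasDerivAt (fun φ : ℝ => Real.arccos (d * Real.sin φ / R))
        (-(1 / Real.sqrt (1 - (d * Real.sin φ / R) ^ 2)) * (d * Real.cos φ / R)) φ :=
      by have := (Real.hasDerivAt_arccos (hnem1 φ) (hne1 φ)).comp φ hu; exact this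
    have h := (hasDerivAt_id φ).add (((harc.const_mul 2).const_mul (n : ℝ)))
    refine h.congr_deriv (Eq.symm ?_)
    rw [hsq1 φ]
    have h1 := (hS0 φ).ne'
    field_simp
    ring
  have derivA : deriv A = fun φ => 1 - 2 * n * d * Real.cos φ / S φ :=
    funext fun φ => (hA' φ).deriv
  -- derivative of S
  have hS' : ∀ φ : ℝ, HasDerivAt S (-(d ^ 2 * Real.sin φ * Real.cos φ) / S φ) φ := by
    intro φ
    have hg : HasDerivAt (fun φ : ℝ => R ^ 2 - d ^ 2 * Real.sin φ ^ 2)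
        (0 - d ^ 2 * ((2 : ℕ) * Real.sin φ ^ (2 - 1) * Real.cos φ)) φ :=
      (hasDerivAt_const φ (R ^ 2)).sub (((Real.hasDerivAt_sin φ).pow 2).const_mul (d ^ 2))
    have h := (Real.hasDerivAt_sqrt (hpos φ).ne').comp φ hg
    refine h.congr_deriv (Eq.symm ?_)
    rw [show Real.sqrt (R ^ 2 - d ^ 2 * Real.sin φ ^ 2) = S φ from rfl]
    have h1 := (hS0 φ).ne'
    field_simp [hSdef]
    ring
  -- second derivative of A
  have hA'' : ∀ φ : ℝ, HasDerivAt (fun φ => 1 - 2 * n * d * Real.cos φ / S φ)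
      (2 * n * d * Real.sin φ * (R ^ 2 - d ^ 2) / S φ ^ 3) φ := by
    intro φ
    have hnum : HasDerivAt (fun φ : ℝ => 2 * n * d * Real.cos φ)
        (2 * n * d * (-Real.sin φ)) φ := (Real.hasDerivAt_cos φ).const_mul _
    have hq := hnum.div (hS' φ) (hS0 φ).ne'
    have h := (hasDerivAt_const φ (1 : ℝ)).sub hq
    refine h.congr_deriv (Eq.symm ?_)
    have h1 := (hS0 φ).ne'
    have h2 := hSsq φ
    have h3 := Real.sin_sq_add_cos_sq φ
    field_simp
    linear_combination (-(2*(n:ℝ)*d*Real.sin φ)) * h2 + (2*(n:ℝ)*d^3*Real.sin φ) * h3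
  have dderivA : ∀ φ : ℝ, deriv (deriv A) φ
      = 2 * n * d * Real.sin φ * (R ^ 2 - d ^ 2) / S φ ^ 3 := by
    intro φ
    rw [derivA]
    exact (hA'' φ).deriv
  -- derivatives of P
  have hP1 : deriv P = fun φ => -d * Real.cos φ :=
    funext fun φ => ((Real.hasDerivAt_sin φ).const_mul (-d)).deriv
  have hP2 : ∀ φ : ℝ, deriv (deriv P) φ = d * Real.sin φ := by
    intro φ
    rw [hP1]
    have := ((Real.hasDerivAt_cos φ).const_mul (-d)).deriv
    rw [this]; ring
  -- key factorization
  have key : ∀ φ : ℝ, E φ = 2 * n * d ^ 2 * Real.sin φ * Real.cos φ *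
      (3 * (S φ - n * d * Real.cos φ) ^ 2 + ((n : ℝ) ^ 2 - 1) * d ^ 2 * Real.cos φ ^ 2)
      / S φ ^ 3 := by
    intro φ
    have hE : E φ = deriv (deriv P) φ * deriv A φ - deriv P φ * deriv (deriv A) φ +
        P φ * (deriv A φ) ^ 3 := rfl
    have hPφ : P φ = -d * Real.sin φ := rfl
    rw [hE, hP2 φ, hP1, dderivA φ, derivA, hPφ]
    have h1 := (hS0 φ).ne'
    have h2 := hSsq φ
    have h3 := Real.sin_sq_add_cos_sq φ
    simp only []
    rw [eq_div_iff (by positivity)]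
    field_simp
    linear_combination (-(2*(n:ℝ)*d*Real.sin φ*Real.cos φ)) * h2
      + (2*(n:ℝ)*d^3*Real.sin φ*Real.cos φ) * h3
  -- the second factor is positive
  have hF : ∀ φ : ℝ, 0 < 3 * (S φ - n * d * Real.cos φ) ^ 2 +
      ((n : ℝ) ^ 2 - 1) * d ^ 2 * Real.cos φ ^ 2 := by
    intro φ
    have hn1 : (1 : ℝ) ≤ (n : ℝ) := by exact_mod_cast hn
    have h2 := hSsq φ
    have h3 := Real.sin_sq_add_cos_sq φ
    have hgt : d ^ 2 * Real.cos φ ^ 2 < S φ ^ 2 := by nlinarith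
    rcases eq_or_ne (S φ - n * d * Real.cos φ) 0 with h0 | h0
    · have hc : Real.cos φ ≠ 0 := by
        intro hc
        rw [hc] at h0
        have := hS0 φ
        simp at h0
        linarith
      have hc2 : 0 < Real.cos φ ^ 2 := by positivity
      have hsq : S φ ^ 2 = ((n:ℝ) * d * Real.cos φ) ^ 2 := by
        rw [sub_eq_zero] at h0; rw [h0]
      have hd2c2 : 0 < d ^ 2 * Real.cos φ ^ 2 := by positivity
      have hnn : (1 : ℝ) < (n : ℝ) ^ 2 := by nlinarith [hsq, hgt, hd2c2]
      have hpos2 : 0 < ((n : ℝ) ^ 2 - 1) * (d ^ 2 * Real.cos φ ^ 2) :=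
        mul_pos (by linarith) hd2c2
      nlinarith [hpos2, sq_nonneg (S φ - (n:ℝ) * d * Real.cos φ), h0]
    · have h1 : 0 < (S φ - n * d * Real.cos φ) ^ 2 := by positivity
      have h4 : 0 ≤ ((n : ℝ) ^ 2 - 1) * d ^ 2 * Real.cos φ ^ 2 := by
        have : (0:ℝ) ≤ ((n : ℝ) ^ 2 - 1) := by nlinarith
        positivity
      linarith
  -- zero set characterization
  have hEzero : ∀ φ : ℝ, (E φ = 0 ↔ Real.sin φ * Real.cos φ = 0) := by
    intro φ
    rw [key φ]
    constructor
    · intro h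
      have hnum : 2 * n * d ^ 2 * Real.sin φ * Real.cos φ *
          (3 * (S φ - n * d * Real.cos φ) ^ 2 +
            ((n : ℝ) ^ 2 - 1) * d ^ 2 * Real.cos φ ^ 2) = 0 := by
        have := (div_eq_zero_iff.mp h)
        rcases this with h' | h'
        · exact h'
        · exact absurd h' (pow_ne_zero 3 (hS0 φ).ne')
      rcases mul_eq_zero.mp hnum with h' | h'
      · have hn0 : (0:ℝ) < 2 * n * d ^ 2 := by
          have hn1 : (1 : ℝ) ≤ (n : ℝ) := by exact_mod_cast hn
          nlinarith
        have h'' : 2 * (n:ℝ) * d ^ 2 * (Real.sin φ * Real.cos φ) = 0 := by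
          linear_combination h'
        exact (mul_eq_zero.mp h'').resolve_left hn0.ne'
      · exact absurd h' (hF φ).ne'
    · intro h
      rw [show 2 * (n:ℝ) * d ^ 2 * Real.sin φ * Real.cos φ
          = 2 * (n:ℝ) * d ^ 2 * (Real.sin φ * Real.cos φ) by ring, h]
      simp
  have hπ := Real.pi_pos
  have hset : {φ ∈ Set.Ico 0 (2 * Real.pi) | E φ = 0}
      = {0, Real.pi / 2, Real.pi, 3 * Real.pi / 2} := by
    ext φ
    simp only [Set.mem_setOf_eq, Set.mem_Ico, Set.mem_insert_iff, Set.mem_singleton_iff]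
    rw [hEzero φ]
    constructor
    · rintro ⟨⟨h0, h2⟩, hsc0⟩
      have h2φ : Real.sin (2 * φ) = 0 := by
        rw [Real.sin_two_mul]; linear_combination 2 * hsc0
      obtain ⟨k, hk⟩ := Real.sin_eq_zero_iff.mp h2φ
      have hk0 : 0 ≤ k := by
        by_contra hneg
        push_neg at hneg
        have hkle : k ≤ -1 := by omega
        have hk1 : (k : ℝ) ≤ -1 := by exact_mod_cast hkle
        nlinarith
      have hk4 : k < 4 := by
        by_contra hge
        push_neg at hge
        have hk1 : (4 : ℝ) ≤ (k : ℝ) := by exact_mod_cast hge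
        nlinarith
      interval_cases k
      · left; push_cast at hk; linarith
      · right; left; push_cast at hk; linarith
      · right; right; left; push_cast at hk; linarith
      · right; right; right; push_cast at hk; linarith
    · rintro (rfl | rfl | rfl | rfl)
      · exact ⟨⟨le_refl _, by linarith⟩, by simp⟩
      · exact ⟨⟨by linarith, by linarith⟩, by simp [Real.cos_pi_div_two]⟩
      · exact ⟨⟨by linarith, by linarith⟩, by simp⟩
      · refine ⟨⟨by linarith, by linarith⟩, ?_⟩
        rw [show 3 * Real.pi / 2 = Real.pi + Real.pi / 2 by ring]
        simp [Real.cos_add]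
  rw [hset]
  exact aux_card_four _ _ _ (by linarith) (by linarith) (by linarith)
end

section
/- For a Minkowski (projective Finsler) metric on ℝ² given by a norm N, the billiard reflection at a boundary point with tangent line T is characterized by: N(u) = N(v) = 1 and the linear functional w = dN(u) - dN(v) (difference of the Legendre transforms/supporting functionals of the indicatrix at u and v) vanishes on the direction of T. Equivalently, u - v is conjugate to T: the supporting hyperplanes of the unit ball {N ≤ 1} at u and v intersect in a point lying on the line through the origin parallel to T (or are both parallel to T). -/
/-- Euler's identity for positively 1-homogeneous functions. -/
lemma euler_aux (N : EuclideanSpace ℝ (Fin 2) → ℝ)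
    (hsm : ∀ x : EuclideanSpace ℝ (Fin 2), x ≠ 0 → DifferentiableAt ℝ N x)
    (hgauge : ∀ (s : ℝ) (x : EuclideanSpace ℝ (Fin 2)), 0 < s → N (s • x) = s * N x)
    (x : EuclideanSpace ℝ (Fin 2)) (hx : x ≠ 0) :
    fderiv ℝ N x x = N x := by
  have h1 : HasFDerivAt N (fderiv ℝ N x) x := (hsm x hx).hasFDerivAt
  have hd : HasDerivAt (fun t : ℝ => t • x) x 1 := by
    simpa using (hasDerivAt_id (1:ℝ)).smul_const x
  have h1' : HasFDerivAt N (fderiv ℝ N x) ((1:ℝ) • x) := by rw [one_smul]; exact h1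
  have h2 : HasDerivAt (fun t : ℝ => N (t • x)) (fderiv ℝ N x x) 1 := h1'.comp_hasDerivAt 1 hd
  have h3 : (fun t : ℝ => N (t • x)) =ᶠ[nhds (1:ℝ)] fun t => t * N x := by
    filter_upwards [IsOpen.mem_nhds isOpen_Ioi (by norm_num : (1:ℝ) ∈ Set.Ioi (0:ℝ))] with t ht
    exact hgauge t x ht
  have h4 : HasDerivAt (fun t : ℝ => t * N x) (fderiv ℝ N x x) 1 :=
    h2.congr_of_eventuallyEq h3.symm
  have h5 : HasDerivAt (fun t : ℝ => t * N x) (N x) 1 := by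
    simpa using (hasDerivAt_id (1:ℝ)).mul_const (N x)
  exact h4.unique h5

/-- Equivalence of the variational and geometric descriptions of the Minkowski (projective
Finsler) billiard reflection in the plane. Let `N` be a smooth, strictly convex
(possibly non-symmetric) gauge, `u, v` unit vectors (`N(u) = N(v) = 1`), and `τ ≠ 0` a
direction vector of the boundary tangent line `T`. The variational reflection law — the
functional `w = dN(u) - dN(v)` vanishes on the direction of `T` — holds if and only if the
supporting (tangent) lines of the indicatrix `{N = 1}` at `u` and at `v` meet at a point
on the line through the origin parallel to `T`, or are both parallel to `T`. -/
theorem stmt_19 (N : EuclideanSpace ℝ (Fin 2) → ℝ)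
    (hsm : ∀ x : EuclideanSpace ℝ (Fin 2), x ≠ 0 → DifferentiableAt ℝ N x)
    (hgauge : ∀ (s : ℝ) (x : EuclideanSpace ℝ (Fin 2)), 0 < s → N (s • x) = s * N x)
    (hconv : StrictConvex ℝ {x : EuclideanSpace ℝ (Fin 2) | N x ≤ 1})
    (hpos : ∀ x : EuclideanSpace ℝ (Fin 2), x ≠ 0 → 0 < N x)
    (u v τ : EuclideanSpace ℝ (Fin 2)) (hτ : τ ≠ 0) (huv : u ≠ v)
    (hu : N u = 1) (hv : N v = 1) :
    (fderiv ℝ N u τ - fderiv ℝ N v τ = 0) ↔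
      ((∃ (z : EuclideanSpace ℝ (Fin 2)) (s : ℝ), z = s • τ ∧
          fderiv ℝ N u (z - u) = 0 ∧ fderiv ℝ N v (z - v) = 0) ∨
        (fderiv ℝ N u τ = 0 ∧ fderiv ℝ N v τ = 0)) := by
  have hu0 : u ≠ 0 := by
    rintro rfl; have h := hgauge 2 0 (by norm_num); rw [smul_zero, hu] at h; norm_num at h
  have hv0 : v ≠ 0 := by
    rintro rfl; have h := hgauge 2 0 (by norm_num); rw [smul_zero, hv] at h; norm_num at h
  have heu : fderiv ℝ N u u = 1 := by rw [euler_aux N hsm hgauge u hu0, hu]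
  have hev : fderiv ℝ N v v = 1 := by rw [euler_aux N hsm hgauge v hv0, hv]
  constructor
  · intro h
    have heq : fderiv ℝ N u τ = fderiv ℝ N v τ := by linarith [sub_eq_zero.mp h]
    by_cases hc : fderiv ℝ N u τ = 0
    · exact Or.inr ⟨hc, heq ▸ hc⟩
    · refine Or.inl ⟨(fderiv ℝ N u τ)⁻¹ • τ, (fderiv ℝ N u τ)⁻¹, rfl, ?_, ?_⟩
      · simp [map_sub, map_smul, heu, smul_eq_mul, inv_mul_cancel₀ hc]
      · simp [map_sub, map_smul, hev, ← heq, smul_eq_mul, inv_mul_cancel₀ hc]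
  · rintro (⟨z, s, rfl, h1, h2⟩ | ⟨h1, h2⟩)
    · have hs : s ≠ 0 := by
        rintro rfl
        simp only [zero_smul, zero_sub, map_neg, neg_eq_zero, heu] at h1
        exact one_ne_zero h1
      have e1 : s * fderiv ℝ N u τ = 1 := by
        have := h1; simp only [map_sub, map_smul, heu, smul_eq_mul, sub_eq_zero] at this
        exact this
      have e2 : s * fderiv ℝ N v τ = 1 := by
        have := h2; simp only [map_sub, map_smul, hev, smul_eq_mul, sub_eq_zero] at this
        exact this
      have : fderiv ℝ N u τ = fderiv ℝ N v τ :=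
        mul_left_cancel₀ hs (e1.trans e2.symm)
      rw [this, sub_self]
    · rw [h1, h2, sub_self]
end
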